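/- Let A₁, A₂, ..., A_k be finitely many infinite sets of positive integers, each containing 1 and each satisfying |A_j ∩ {1,...,n}| = (1+o(1)) · (log n)/(log log n) as n → ∞. Then there exist a constant c, an integer n₀, and a single infinite set M of positive integers such that 0 < p(n,A_j,M) ≤ n^c for every j ∈ {1,...,k} and every n > n₀. -/

import Mathlib

open Filter

/-- `pCount A M n` is `p(n, A, M)`: the number of finitely supported functions
`m : ℕ → ℕ` with support contained in `A`, nonzero values in `M`, and
`∑_{a ∈ A} m(a) · a = n`. -/
noncomputable def pCount (A M : Set ℕ) (n : ℕ) : ℕ :=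
  {f : ℕ →₀ ℕ | ↑f.support ⊆ A ∧ (∀ a ∈ f.support, f a ∈ M) ∧
    f.sum (fun a m => m * a) = n}.ncard

set_option maxRecDepth 8000
set_option maxHeartbeats 1000000

namespace Stmt13

noncomputable def Phi (r : ℕ) : ℕ := ⌈Real.log r / (5 * Real.log (Real.log r))⌉₊

/-- "floating point" numbers with mantissa length polylogarithmic in exponent -/
def floatSet : Set ℕ := {m | ∃ e s : ℕ, 1 ≤ s ∧ s ≤ (e+2)^40 ∧ m = s * 2^e}

def MK (K : ℕ) : Set ℕ := Set.Icc 1 K ∪ floatSet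

lemma pow_mem_floatSet (e : ℕ) : 2^e ∈ floatSet :=
  ⟨e, 1, le_refl _, Nat.one_le_pow _ _ (by omega), (one_mul _).symm⟩

lemma MK_infinite (K : ℕ) : (MK K).Infinite :=
  Set.infinite_of_injective_forall_mem (f := fun e : ℕ => 2^e)
    (Nat.pow_right_injective (le_refl 2))
    (fun e => Or.inr (pow_mem_floatSet e))

lemma MK_pos (K : ℕ) : ∀ m ∈ MK K, 0 < m := by
  rintro m (hm | ⟨e, s, hs1, _, rfl⟩)
  · exact lt_of_lt_of_le one_pos hm.1
  · positivity

lemma Icc_subset_MK (K : ℕ) : Set.Icc 1 K ⊆ MK K := Set.subset_union_left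

lemma aux40 : ∀ t : ℕ, 9 ≤ t → 40 * t ≤ 2 ^ t := by
  intro t ht
  induction t with
  | zero => omega
  | succ n ih =>
    rcases Nat.lt_or_ge n 9 with h | h
    · have : n = 8 := by omega
      subst this; norm_num
    · have := ih (by omega)
      have h2 : 40 ≤ 2 ^ n := le_trans (by omega) this
      calc 40 * (n+1) = 40 * n + 40 := by ring
        _ ≤ 2^n + 2^n := by omega
        _ = 2^(n+1) := by ring

lemma aux15 : ∀ t : ℕ, 16 ≤ t → 15 * t + 16 ≤ 2 ^ (t - 1) := by
  intro t ht
  induction t with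
  | zero => omega
  | succ n ih =>
    rcases Nat.lt_or_ge n 16 with h | h
    · have : n = 15 := by omega
      subst this; norm_num
    · have := ih (by omega)
      have hn : n - 1 + 1 = n := by omega
      have h2 : (15 : ℕ) ≤ 2 ^ (n-1) := le_trans (by omega) this
      have : 2 ^ (n - 1) + 2^(n-1) = 2^n := by
        calc 2^(n-1) + 2^(n-1) = 2^(n-1) * 2 := by ring
          _ = 2^(n-1+1) := (pow_succ 2 (n-1)).symm
          _ = 2^n := by rw [hn]
      calc 15 * (n+1) + 16 = (15 * n + 16) + 15 := by ring
        _ ≤ 2^(n-1) + 2^(n-1) := by omega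
        _ = 2^n := this
      


lemma approx (q : ℕ) (hq : 2^512 ≤ q) :
    ∃ m : ℕ, m ∈ floatSet ∧ 1 ≤ m ∧ m ≤ q ∧ (q - m) * (Nat.log 2 q)^20 ≤ 2^20 * q := by
  have hq0 : q ≠ 0 := by
    have : (0:ℕ) < 2^512 := Nat.pow_pos (by norm_num)
    omega
  set L := Nat.log 2 q with hLdef
  have hL512 : 512 ≤ L := (Nat.le_log_iff_pow_le one_lt_two hq0).mpr hq
  set LL := Nat.log 2 L with hLLdef
  have hLL9 : 9 ≤ LL := by
    have : (2:ℕ)^9 ≤ L := by norm_num; omega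
    exact (Nat.le_log_iff_pow_le one_lt_two (by omega)).mpr this
  have h2LLL : 2 ^ LL ≤ L := Nat.pow_log_le_self 2 (by omega)
  have hLlt : L < 2 ^ (LL + 1) := Nat.lt_pow_succ_log_self one_lt_two L
  have h40 : 40 * LL ≤ L := le_trans (aux40 LL hLL9) h2LLL
  set e := L - 20 * LL with he
  have heq : e + 20 * LL = L := by omega
  have h2e : L ≤ 2 * e := by omega
  have heL : e ≤ L := by omega
  set s := q / 2 ^ e with hs
  have hpow_le : (2:ℕ)^e ≤ q := le_trans (Nat.pow_le_pow_right (by norm_num) heL)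
    (le_trans (Nat.pow_log_le_self 2 hq0) (le_refl _))
  have hs1 : 1 ≤ s := Nat.one_le_div_iff (Nat.pow_pos (by norm_num)) |>.mpr hpow_le
  have hqlt : q < 2 ^ (L + 1) := Nat.lt_pow_succ_log_self one_lt_two q
  have hsub : s < 2 ^ (20 * LL + 1) := by
    rw [hs, Nat.div_lt_iff_lt_mul (Nat.pow_pos (by norm_num))]
    calc q < 2 ^ (L + 1) := hqlt
      _ = 2 ^ (20 * LL + 1) * 2 ^ e := by rw [← pow_add]; congr 1; omega
  have hsbound : s ≤ (e + 2)^40 := by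
    have h1 : 2 ^ (LL - 1) ≤ e := by
      have : 2 * 2 ^ (LL - 1) = 2 ^ LL := by
        rw [← pow_succ']
        congr 1; omega
      omega
    have h2 : (2:ℕ) ^ (20 * LL + 1) ≤ 2 ^ (40 * LL - 40) :=
      Nat.pow_le_pow_right (by norm_num) (by omega)
    have h3 : (2:ℕ) ^ (40 * LL - 40) = (2 ^ (LL - 1))^40 := by
      rw [← pow_mul]; congr 1; omega
    have h4 : (2^(LL-1):ℕ)^40 ≤ (e+2)^40 := Nat.pow_le_pow_left (by omega) _
    omega
  refine ⟨s * 2^e, ⟨e, s, hs1, hsbound, rfl⟩, ?_, ?_, ?_⟩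
  · exact Nat.one_le_iff_ne_zero.mpr (by positivity)
  · rw [hs]; exact Nat.div_mul_le_self q _
  · have hmod : q - s * 2^e = q % 2^e := by
      have := Nat.mod_add_div q (2^e)
      have h' : s * 2^e = 2^e * (q / 2^e) := by rw [hs, mul_comm]
      omega
    rw [hmod]
    have hmlt : q % 2^e < 2^e := Nat.mod_lt _ (Nat.pow_pos (by norm_num))
    have key1 : q % 2^e * 2^(20*LL) < 2^L := by
      calc q % 2^e * 2^(20*LL) < 2^e * 2^(20*LL) := by
            exact Nat.mul_lt_mul_of_lt_of_le hmlt (le_refl _) (Nat.pow_pos (by norm_num))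
        _ = 2^L := by rw [← pow_add, heq]
    have key2 : (L:ℕ)^20 ≤ 2^(20*LL) * 2^20 := by
      calc L^20 ≤ (2^(LL+1))^20 := Nat.pow_le_pow_left hLlt.le _
        _ = 2^(20*LL) * 2^20 := by rw [← pow_mul, ← pow_add]; congr 1; ring
    calc q % 2^e * L^20 ≤ q % 2^e * (2^(20*LL) * 2^20) := Nat.mul_le_mul_left _ key2
      _ = (q % 2^e * 2^(20*LL)) * 2^20 := by ring
      _ ≤ 2^L * 2^20 := Nat.mul_le_mul_right _ (le_of_lt key1)
      _ ≤ q * 2^20 := Nat.mul_le_mul_right _ (Nat.pow_log_le_self 2 hq0)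
      _ = 2^20 * q := by ring



lemma log_le_two_sqrt {x : ℝ} (hx : 1 ≤ x) : Real.log x ≤ 2 * Real.sqrt x := by
  have h0 : (0:ℝ) < x := lt_of_lt_of_le one_pos hx
  have hs : Real.log (Real.sqrt x) = Real.log x / 2 := Real.log_sqrt h0.le
  have h1 : Real.log (Real.sqrt x) ≤ Real.sqrt x - 1 :=
    Real.log_le_sub_one_of_pos (Real.sqrt_pos.mpr h0)
  nlinarith [Real.sqrt_nonneg x]

lemma log_45000 : (10:ℝ) ≤ Real.log 45000 := by
  rw [Real.le_log_iff_exp_le (by norm_num)]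
  have h1 : Real.exp 10 = (Real.exp 1)^(10:ℕ) := by
    rw [← Real.exp_nat_mul]; norm_num
  have h2 : (Real.exp 1)^(10:ℕ) ≤ (2.7182818286:ℝ)^(10:ℕ) :=
    pow_le_pow_left₀ (Real.exp_pos 1).le Real.exp_one_lt_d9.le _
  calc Real.exp 10 = (Real.exp 1)^(10:ℕ) := h1
    _ ≤ (2.7182818286:ℝ)^(10:ℕ) := h2
    _ ≤ 45000 := by norm_num

lemma id_div_log_mono {u v : ℝ} (hu : Real.exp 1 ≤ u) (huv : u ≤ v) :
    u / Real.log u ≤ v / Real.log v := by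
  have h := Real.log_div_self_antitoneOn (by exact hu) (by exact hu.trans huv) huv
  have hu1 : 1 < u := lt_of_lt_of_le (by nlinarith [Real.add_one_le_exp 1]) hu
  have hv1 : 1 < v := lt_of_lt_of_le hu1 huv
  have hlu : 0 < Real.log u := Real.log_pos hu1
  have hlv : 0 < Real.log v := Real.log_pos hv1
  have hBpos : 0 < Real.log v / v := div_pos hlv (by linarith)
  have : Real.log v / v ≤ Real.log u / u := h
  calc u / Real.log u = (Real.log u / u)⁻¹ := by rw [inv_div]
    _ ≤ (Real.log v / v)⁻¹ := by
        apply inv_anti₀ hBpos this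
    _ = v / Real.log v := by rw [inv_div]

lemma log_one_sub_ge {u : ℝ} (h0 : 0 ≤ u) (h1 : u ≤ 1/2) : -(2*u) ≤ Real.log (1 - u) := by
  have hpos : (0:ℝ) < 1 - u := by linarith
  have hexp : Real.exp (-(2*u)) ≤ 1 - u := by
    have h2 : 1 + 2*u ≤ Real.exp (2*u) := by
      have := Real.add_one_le_exp (2*u); linarith
    have h3 : Real.exp (-(2*u)) = (Real.exp (2*u))⁻¹ := by
      rw [Real.exp_neg]
    rw [h3]
    have h4 : (Real.exp (2*u))⁻¹ ≤ (1 + 2*u)⁻¹ := by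
      apply inv_anti₀ (by linarith) h2
    have h5 : (1 + 2*u)⁻¹ ≤ 1 - u := by
      rw [inv_le_iff_one_le_mul₀ (by linarith)]
      nlinarith
    linarith
  calc -(2*u) = Real.log (Real.exp (-(2*u))) := (Real.log_exp _).symm
    _ ≤ Real.log (1 - u) := Real.log_le_log (Real.exp_pos _) hexp

lemma main_dec {x x' : ℝ} (hx : 45000 ≤ x) (hx' : 45000 ≤ x')
    (h : x' ≤ x - 15 * Real.log x) :
    x' / Real.log x' + 5 ≤ x / Real.log x := by
  set g := Real.log x with hgdef
  have hx0 : (0:ℝ) < x := by linarith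
  have hg10 : 10 ≤ g := le_trans log_45000 (Real.log_le_log (by norm_num) hx)
  have hsq : (212:ℝ) ≤ Real.sqrt x := by
    rw [show (212:ℝ) = Real.sqrt (212^2) by rw [Real.sqrt_sq]; norm_num]
    exact Real.sqrt_le_sqrt (by nlinarith)
  have hgsq : g ≤ 2 * Real.sqrt x := log_le_two_sqrt (by linarith)
  have hsqx : Real.sqrt x * Real.sqrt x = x := Real.mul_self_sqrt hx0.le
  have hgx : 15 * g ≤ x / 2 := by nlinarith
  set y := x - 15 * g with hydef
  have hy : x/2 ≤ y := by linarith
  set u := 15 * g / x with hudef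
  have hu0 : 0 ≤ u := by positivity
  have hu12 : u ≤ 1/2 := by
    rw [hudef, div_le_iff₀ hx0]; linarith
  have hyx : y = x * (1 - u) := by
    rw [hudef]; field_simp; exact hydef
  have hlogy : g - 30 * g / x ≤ Real.log y := by
    rw [hyx, Real.log_mul (ne_of_gt hx0) (by nlinarith)]
    have := log_one_sub_ge hu0 hu12
    have h30 : -(2*u) = -(30 * g / x) := by rw [hudef]; ring
    rw [h30] at this
    linarith
  have hdelta : (30 * g / x) * x = 30 * g := by field_simp
  have hdpos : 0 < g - 30 * g / x := by
    have : 30 * g / x ≤ 30 * g / 45000 := by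
      apply div_le_div_of_nonneg_left (by linarith) (by norm_num) hx
    nlinarith
  have hypos : 0 < y := by linarith
  have hlogy_pos : 0 < Real.log y := lt_of_lt_of_le hdpos hlogy
  -- step 1: monotonicity
  have hexp1 : Real.exp 1 ≤ x' := by
    have : Real.exp 1 < 2.7182818286 := Real.exp_one_lt_d9
    linarith
  have step1 : x' / Real.log x' ≤ y / Real.log y := id_div_log_mono hexp1 h
  -- step 2: increase denominator
  have step2 : y / Real.log y ≤ y / (g - 30 * g / x) :=
    div_le_div_of_nonneg_left hypos.le hdpos hlogy
  -- step 3: algebra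
  have step3 : y / (g - 30 * g / x) ≤ (x - 5 * g) / g := by
    rw [div_le_div_iff₀ hdpos (by linarith)]
    have hd0 : 0 ≤ 30 * g / x := by positivity
    nlinarith [hdelta, hd0, hg10]
  have step4 : (x - 5 * g) / g + 5 = x / g := by
    field_simp; ring
  calc x' / Real.log x' + 5 ≤ y / (g - 30*g/x) + 5 := by linarith
    _ ≤ (x - 5*g)/g + 5 := by linarith
    _ = x / g := step4



lemma log_big {r : ℕ} (h : 2^(2^16) < r) : 45000 ≤ Real.log r := by
  have h1 : ((2:ℝ)^(65536:ℕ)) ≤ (r:ℝ) := by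
    have : ((2^(2^16) : ℕ) : ℝ) ≤ ((r:ℕ):ℝ) := Nat.cast_le.mpr h.le
    rw [Nat.cast_pow] at this
    norm_num at this ⊢
    exact this
  have h3 : Real.log ((2:ℝ)^(65536:ℕ)) = 65536 * Real.log 2 := by
    rw [Real.log_pow]; norm_num
  have h4 : (0.6931471803 : ℝ) < Real.log 2 := Real.log_two_gt_d9
  have h5 : Real.log ((2:ℝ)^(65536:ℕ)) ≤ Real.log r := by
    apply Real.log_le_log (by positivity) h1
  rw [h3] at h5
  linarith

lemma sqrt_big_facts {x : ℝ} (hx : 45000 ≤ x) :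
    (212:ℝ) ≤ Real.sqrt x ∧ Real.sqrt x * Real.sqrt x = x ∧ Real.log x ≤ 2 * Real.sqrt x := by
  refine ⟨?_, Real.mul_self_sqrt (by linarith), log_le_two_sqrt (by linarith)⟩
  rw [show (212:ℝ) = Real.sqrt (212^2) by rw [Real.sqrt_sq]; norm_num]
  exact Real.sqrt_le_sqrt (by nlinarith)

lemma logx_pos {x : ℝ} (hx : 45000 ≤ x) : (10:ℝ) ≤ Real.log x :=
  le_trans log_45000 (Real.log_le_log (by norm_num) hx)

lemma t_ge_60 {x : ℝ} (hx : 45000 ≤ x) : 60 * Real.log x ≤ x := by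
  obtain ⟨hs, hm, hl⟩ := sqrt_big_facts hx
  nlinarith [Real.sqrt_nonneg x]

lemma phi_ge_two {r : ℕ} (h45 : 45000 ≤ Real.log r) : 2 ≤ Phi r := by
  set x := Real.log r with hx
  have hlx : (10:ℝ) ≤ Real.log x := logx_pos h45
  have h2 : (2:ℝ) ≤ x / (5 * Real.log x) := by
    rw [le_div_iff₀ (by linarith)]
    have := t_ge_60 h45
    linarith
  exact Nat.lt_ceil.mpr (by exact lt_of_lt_of_le (by norm_num) h2)

lemma phi_dec {r r' : ℕ} (h45 : 45000 ≤ Real.log r) (h45' : 45000 ≤ Real.log r')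
    (hle : Real.log r' ≤ Real.log r - 15 * Real.log (Real.log r)) :
    Phi r' + 1 ≤ Phi r := by
  have hmd := main_dec h45 h45' hle
  set x := Real.log r
  set x' := Real.log r'
  have hlx : (10:ℝ) ≤ Real.log x := logx_pos h45
  have hlx' : (10:ℝ) ≤ Real.log x' := logx_pos h45'
  have e1 : x' / (5 * Real.log x') = (x' / Real.log x') / 5 := by
    rw [div_div, mul_comm]
  have e2 : x / (5 * Real.log x) = (x / Real.log x) / 5 := by
    rw [div_div, mul_comm]
  have hdiv : x' / (5 * Real.log x') + 1 ≤ x / (5 * Real.log x) := by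
    rw [e1, e2]; linarith
  have h0 : (0:ℝ) ≤ x' / (5 * Real.log x') := by positivity
  calc Phi r' + 1 = ⌈x' / (5 * Real.log x') + 1⌉₊ := (Nat.ceil_add_one h0).symm
    _ ≤ Phi r := Nat.ceil_le_ceil hdiv

lemma avail_num {r : ℕ} (hr : 2^(2^16) < r) (c : ℕ)
    (hc : Real.log (Nat.sqrt r) ≤ (c:ℝ) * (2 * Real.log (Real.log (Nat.sqrt r)))) :
    Phi r + 1 ≤ c := by
  have h45 : 45000 ≤ Real.log r := log_big hr
  set x := Real.log r with hxdef
  set y := Nat.sqrt r with hydef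
  have hrpos : 0 < r := lt_of_le_of_lt (Nat.zero_le _) hr
  have hy1 : 1 ≤ y := Nat.sqrt_pos.mpr hrpos
  have hy1R : (1:ℝ) ≤ (y:ℝ) := by exact_mod_cast hy1
  have hly_ge : x / 2 - 1 ≤ Real.log y := by
    have hlt : r < (y+1) * (y+1) := Nat.lt_succ_sqrt r
    have h1 : (r:ℝ) ≤ ((y:ℝ) + 1) * ((y:ℝ) + 1) := by
      have : (r:ℝ) ≤ (((y+1) * (y+1) : ℕ) : ℝ) := Nat.cast_le.mpr hlt.le
      rw [Nat.cast_mul, Nat.cast_add, Nat.cast_one] at this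
      exact this
    have h2 : x ≤ 2 * Real.log ((y:ℝ) + 1) := by
      have := Real.log_le_log (by positivity : (0:ℝ) < r) h1
      rw [Real.log_mul (by linarith) (by linarith)] at this
      rw [hxdef]; linarith
    have h3 : Real.log ((y:ℝ) + 1) ≤ Real.log (2*(y:ℝ)) := by
      apply Real.log_le_log (by linarith)
      linarith
    have h4 : Real.log (2*(y:ℝ)) = Real.log 2 + Real.log y := by
      rw [Real.log_mul (by norm_num) (by linarith)]
    have h5 : Real.log 2 ≤ 1 := by
      have := Real.log_le_sub_one_of_pos (by norm_num : (0:ℝ) < 2)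
      linarith
    linarith
  have hly_le : Real.log y ≤ x := by
    rw [hxdef]
    apply Real.log_le_log (by positivity)
    exact_mod_cast Nat.sqrt_le_self r
  have hy_big : (22499:ℝ) ≤ Real.log y := by linarith
  have hlly_pos : (1:ℝ) ≤ Real.log (Real.log y) := by
    have h3 : (1:ℝ) ≤ Real.log 3 := by
      rw [Real.le_log_iff_exp_le (by norm_num)]
      have := Real.exp_one_lt_d9
      calc Real.exp 1 ≤ 2.7182818286 := this.le
        _ ≤ 3 := by norm_num
    calc (1:ℝ) ≤ Real.log 3 := h3
      _ ≤ Real.log (Real.log y) := Real.log_le_log (by norm_num) (by linarith)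
  have hlly_le : Real.log (Real.log y) ≤ Real.log x := by
    apply Real.log_le_log (by linarith) hly_le
  have hlx : (10:ℝ) ≤ Real.log x := logx_pos h45
  have hc' : Real.log y ≤ (c:ℝ) * (2 * Real.log x) := by
    calc Real.log y ≤ (c:ℝ) * (2 * Real.log (Real.log y)) := hc
      _ ≤ (c:ℝ) * (2 * Real.log x) := by
          apply mul_le_mul_of_nonneg_left (by linarith) (by positivity)
  -- c ≥ x/(4 lx) - 1
  have hkey : x / (4 * Real.log x) ≤ (c:ℝ) + 1 := by
    rw [div_le_iff₀ (by linarith)]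
    have hexp : ((c:ℝ)+1) * (4 * Real.log x) = 2 * ((c:ℝ) * (2*Real.log x)) + 4 * Real.log x := by
      ring
    rw [hexp]
    linarith
  -- gap
  set t := x / Real.log x with htdef
  have hlxpos : (0:ℝ) < Real.log x := by linarith
  have ht60 : 60 ≤ t := by
    rw [htdef, le_div_iff₀ hlxpos]
    have := t_ge_60 h45
    linarith
  have e5 : x / (5 * Real.log x) = t / 5 := by
    rw [htdef]; ring
  have e4 : x / (4 * Real.log x) = t / 4 := by
    rw [htdef]; ring
  rw [e4] at hkey
  have hceil : ((Phi r : ℕ) : ℝ) < x / (5 * Real.log x) + 1 := Nat.ceil_lt_add_one (by positivity)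
  rw [e5] at hceil
  have hfin : ((Phi r + 1 : ℕ) : ℝ) ≤ (c:ℝ) := by
    push_cast
    have : t/5 + 2 ≤ t/4 - 1 := by linarith
    linarith
  exact_mod_cast hfin

lemma top_num {n : ℕ} (hn : 2^(2^16) < n) (c : ℕ)
    (hc : Real.log n ≤ (c:ℝ) * (2 * Real.log (Real.log n))) :
    Phi n ≤ c := by
  have h45 : 45000 ≤ Real.log n := log_big hn
  set x := Real.log n
  have hlx : (10:ℝ) ≤ Real.log x := logx_pos h45
  have hlxpos : (0:ℝ) < Real.log x := by linarith
  have hcge : x / (2 * Real.log x) ≤ (c:ℝ) := by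
    rw [div_le_iff₀ (by linarith)]
    exact hc
  set t := x / Real.log x with htdef
  have ht60 : 60 ≤ t := by
    rw [htdef, le_div_iff₀ hlxpos]
    have := t_ge_60 h45
    linarith
  have e5 : x / (5 * Real.log x) = t / 5 := by
    rw [htdef]; ring
  have e2 : x / (2 * Real.log x) = t / 2 := by
    rw [htdef]; ring
  rw [e2] at hcge
  have hceil : ((Phi n : ℕ) : ℝ) < x / (5 * Real.log x) + 1 := Nat.ceil_lt_add_one (by positivity)
  rw [e5] at hceil
  have hfin : ((Phi n : ℕ) : ℝ) ≤ (c:ℝ) := by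
    have : t/5 + 1 ≤ t/2 := by linarith
    linarith
  exact_mod_cast hfin



lemma repr_finite_and_le (A M : Set ℕ) (hApos : ∀ a ∈ A, 0 < a) (n : ℕ) :
    {f : ℕ →₀ ℕ | ↑f.support ⊆ A ∧ (∀ a ∈ f.support, f a ∈ M) ∧
      f.sum (fun a m => m * a) = n}.Finite ∧
    pCount A M n ≤ ((M ∩ Set.Icc 1 n).ncard + 1) ^ (A ∩ Set.Icc 1 n).ncard := by
  classical
  set S := {f : ℕ →₀ ℕ | ↑f.support ⊆ A ∧ (∀ a ∈ f.support, f a ∈ M) ∧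
      f.sum (fun a m => m * a) = n} with hS
  have hMfin : (M ∩ Set.Icc 1 n).Finite := (Set.finite_Icc 1 n).inter_of_right M
  have hAfin : (A ∩ Set.Icc 1 n).Finite := (Set.finite_Icc 1 n).inter_of_right A
  set T : Finset ℕ := hAfin.toFinset with hT
  set V : Finset ℕ := insert 0 hMfin.toFinset with hV
  have hbound : ∀ f ∈ S, (∀ a ∈ f.support, a ∈ T ∧ f a ∈ V) := by
    intro f hf a ha
    obtain ⟨hsupp, hmem, hsum⟩ := hf
    have haA : a ∈ A := hsupp ha
    have hfa : 1 ≤ f a := Nat.one_le_iff_ne_zero.mpr (Finsupp.mem_support_iff.mp ha)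
    have ha1 : 1 ≤ a := hApos a haA
    have hterm : f a * a ≤ n := by
      rw [← hsum]
      exact Finset.single_le_sum (f := fun i => f i * i) (fun i _ => Nat.zero_le _) ha
    have hfan : f a ≤ n := le_trans (Nat.le_mul_of_pos_right _ (by omega)) hterm
    have han : a ≤ n := le_trans (by nlinarith) hterm
    constructor
    · simp only [hT, Set.Finite.mem_toFinset]
      exact ⟨haA, ha1, han⟩
    · simp only [hV, Finset.mem_insert, Set.Finite.mem_toFinset]
      exact Or.inr ⟨hmem a ha, hfa, hfan⟩
  have hzero : (0:ℕ) ∈ V := Finset.mem_insert_self _ _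
  let Ψ : S → (↑T → ↑V) := fun f a =>
    if h : (f : ℕ →₀ ℕ) a.1 = 0 then ⟨0, hzero⟩
    else ⟨(f : ℕ →₀ ℕ) a.1, (hbound f f.2 a.1 (Finsupp.mem_support_iff.mpr h)).2⟩
  have hinj : Function.Injective Ψ := by
    intro f g hfg
    ext1
    apply Finsupp.ext
    intro x
    by_cases hx : x ∈ T
    · have := congrFun hfg ⟨x, hx⟩
      simp only [Ψ] at this
      by_cases h1 : (f : ℕ →₀ ℕ) x = 0 <;> by_cases h2 : (g : ℕ →₀ ℕ) x = 0
      · rw [h1, h2]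
      · rw [dif_pos h1, dif_neg h2] at this
        have := congrArg Subtype.val this
        simp at this
        omega
      · rw [dif_neg h1, dif_pos h2] at this
        have := congrArg Subtype.val this
        simp at this
        omega
      · rw [dif_neg h1, dif_neg h2] at this
        have := congrArg Subtype.val this
        simpa using this
    · have hf0 : (f : ℕ →₀ ℕ) x = 0 := by
        by_contra h
        exact hx ((hbound f f.2 x (Finsupp.mem_support_iff.mpr h)).1)
      have hg0 : (g : ℕ →₀ ℕ) x = 0 := by
        by_contra h
        exact hx ((hbound g g.2 x (Finsupp.mem_support_iff.mpr h)).1)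
      rw [hf0, hg0]
  have hfinS : S.Finite := by
    have : Finite S := Finite.of_injective Ψ hinj
    exact Set.toFinite S
  refine ⟨hfinS, ?_⟩
  have hcard : pCount A M n = Nat.card S := by
    rw [pCount, ← hS, Nat.card_coe_set_eq]
  rw [hcard]
  calc Nat.card S ≤ Nat.card (↑T → ↑V) := Nat.card_le_card_of_injective Ψ hinj
    _ = Fintype.card (↑T → ↑V) := Nat.card_eq_fintype_card
    _ = (V.card) ^ (T.card) := by rw [Fintype.card_fun]; simp
    _ ≤ ((M ∩ Set.Icc 1 n).ncard + 1) ^ (A ∩ Set.Icc 1 n).ncard := by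
        have hVc : V.card ≤ (M ∩ Set.Icc 1 n).ncard + 1 := by
          have h1 : V.card ≤ hMfin.toFinset.card + 1 := Finset.card_insert_le _ _
          rw [Set.ncard_eq_toFinset_card _ hMfin]
          omega
        have hTc : T.card = (A ∩ Set.Icc 1 n).ncard := (Set.ncard_eq_toFinset_card _ hAfin).symm
        rw [hTc]
        exact Nat.pow_le_pow_left hVc _



lemma MK_count (K n : ℕ) (hn : 1 ≤ n) :
    (MK K ∩ Set.Icc 1 n).ncard ≤ K + (Nat.log 2 n + 2)^42 := by
  classical
  set L := Nat.log 2 n with hL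
  have hsub : MK K ∩ Set.Icc 1 n ⊆ Set.Icc 1 K ∪ (floatSet ∩ Set.Icc 1 n) := by
    rintro x ⟨hx, hx2⟩
    rcases hx with h | h
    · exact Or.inl h
    · exact Or.inr ⟨h, hx2⟩
  set F : Finset ℕ := (Finset.range (L+1) ×ˢ Finset.range ((L+2)^40+1)).image
      (fun p => p.2 * 2^p.1) with hF
  have hfloat_sub : floatSet ∩ Set.Icc 1 n ⊆ ↑F := by
    rintro x ⟨⟨e, s, hs1, hse, rfl⟩, hx1, hxn⟩
    simp only [hF, Finset.coe_image, Set.mem_image, Finset.mem_coe, Finset.mem_product,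
      Finset.mem_range]
    refine ⟨(e, s), ?_, rfl⟩
    have hpe : 2^e ≤ s * 2^e := Nat.le_mul_of_pos_left _ (by omega)
    have he : e ≤ L := by
      apply (Nat.le_log_iff_pow_le one_lt_two (by omega)).mpr
      omega
    have hsL : s ≤ (L+2)^40 := le_trans hse (Nat.pow_le_pow_left (by omega) _)
    exact ⟨by omega, by omega⟩
  have hIccK : (Set.Icc 1 K).ncard = K := by
    rw [show Set.Icc 1 K = ↑(Finset.Icc 1 K) by simp]
    rw [Set.ncard_coe_finset, Nat.card_Icc]
    omega
  calc (MK K ∩ Set.Icc 1 n).ncard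
      ≤ (Set.Icc 1 K ∪ (floatSet ∩ Set.Icc 1 n)).ncard :=
        Set.ncard_le_ncard hsub ((Set.finite_Icc 1 K).union
          (Set.Finite.subset F.finite_toSet hfloat_sub))
    _ ≤ (Set.Icc 1 K).ncard + (floatSet ∩ Set.Icc 1 n).ncard := Set.ncard_union_le _ _
    _ ≤ K + (L+2)^42 := by
        have h1 : (floatSet ∩ Set.Icc 1 n).ncard ≤ F.card := by
          rw [← Set.ncard_coe_finset F]
          exact Set.ncard_le_ncard hfloat_sub F.finite_toSet
        have h2 : F.card ≤ (L+1) * ((L+2)^40+1) := by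
          calc F.card ≤ ((Finset.range (L+1)) ×ˢ (Finset.range ((L+2)^40+1))).card :=
                Finset.card_image_le
            _ = (L+1) * ((L+2)^40+1) := by
                rw [Finset.card_product, Finset.card_range, Finset.card_range]
        have h3 : (L+1) * ((L+2)^40+1) ≤ (L+2)^42 := by
          have e1 : (L+2)^40 + 1 ≤ 2 * (L+2)^40 := by
            have : 1 ≤ (L+2)^40 := Nat.one_le_pow _ _ (by omega)
            omega
          have e2 : 2 * (L+2)^40 ≤ (L+2) * (L+2)^40 :=
            Nat.mul_le_mul_right _ (by omega)
          calc (L+1) * ((L+2)^40+1) ≤ (L+2) * (2 * (L+2)^40) := by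
                apply Nat.mul_le_mul (by omega) e1
            _ ≤ (L+2) * ((L+2) * (L+2)^40) := Nat.mul_le_mul_left _ e2
            _ = (L+2)^42 := by ring
        omega



lemma log16 : (2:ℝ) ≤ Real.log 16 := by
  rw [Real.le_log_iff_exp_le (by norm_num)]
  have h1 : Real.exp 2 = (Real.exp 1)^(2:ℕ) := by
    rw [← Real.exp_nat_mul]; norm_num
  rw [h1]
  have h2 : (Real.exp 1)^(2:ℕ) ≤ (2.7182818286:ℝ)^(2:ℕ) :=
    pow_le_pow_left₀ (Real.exp_pos 1).le Real.exp_one_lt_d9.le _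
  nlinarith

lemma final_bound (K n t D : ℕ) (hn16 : 16 ≤ n) (hD1 : 1 ≤ D)
    (hlog4 : 4 ≤ Real.log n)
    (hKcond : Real.log (K+2) ≤ Real.log (Real.log n))
    (hD : D ≤ K + (Nat.log 2 n + 2)^42 + 1)
    (ht : (t:ℝ) * Real.log (Real.log n) ≤ (3/2) * Real.log n) :
    ((D:ℝ))^(t:ℕ) ≤ (n:ℝ)^(200:ℝ) := by
  set x := Real.log n with hx
  set lx := Real.log x with hlx
  have hnR : (0:ℝ) < n := by positivity
  have hlx1 : 1 ≤ lx := by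
    rw [hlx]
    calc (1:ℝ) ≤ Real.log 2.8 := by
          rw [Real.le_log_iff_exp_le (by norm_num)]
          linarith [Real.exp_one_lt_d9]
      _ ≤ Real.log x := Real.log_le_log (by norm_num) (by linarith)
  set L := Nat.log 2 n with hLdef
  have hLbound : ((L:ℕ):ℝ) + 2 ≤ 2 * x := by
    have h2L : ((2:ℝ))^(L:ℕ) ≤ (n:ℝ) := by
      have := Nat.pow_log_le_self 2 (show n ≠ 0 by omega)
      exact_mod_cast this
    have h3 : (L:ℝ) * Real.log 2 ≤ x := by
      calc (L:ℝ) * Real.log 2 = Real.log ((2:ℝ)^(L:ℕ)) := by rw [Real.log_pow]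
        _ ≤ x := Real.log_le_log (by positivity) h2L
    have h4 : (0.6931471803:ℝ) < Real.log 2 := Real.log_two_gt_d9
    have h5 : (L:ℝ) * 0.6931471803 ≤ x := by nlinarith [Nat.cast_nonneg (α := ℝ) L]
    linarith
  have hDR : (D:ℝ) ≤ ((K:ℝ)+2) * (((L:ℝ)+2)^(42:ℕ)) := by
    have hW1 : (1:ℝ) ≤ ((L:ℝ)+2)^(42:ℕ) := one_le_pow₀ (by linarith [Nat.cast_nonneg (α := ℝ) L])
    have hDcast : (D:ℝ) ≤ (K:ℝ) + ((L:ℝ)+2)^(42:ℕ) + 1 := by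
      have : ((D:ℕ):ℝ) ≤ ((K + (L + 2)^42 + 1 : ℕ):ℝ) := Nat.cast_le.mpr hD
      push_cast at this
      linarith
    nlinarith [Nat.cast_nonneg (α := ℝ) K]
  have hlogD : Real.log D ≤ Real.log ((K:ℝ)+2) + 42 * Real.log (2*x) := by
    have h1 : Real.log D ≤ Real.log (((K:ℝ)+2) * ((2*x)^(42:ℕ))) := by
      apply Real.log_le_log (by exact_mod_cast hD1)
      calc (D:ℝ) ≤ ((K:ℝ)+2) * (((L:ℝ)+2)^(42:ℕ)) := hDR
        _ ≤ ((K:ℝ)+2) * ((2*x)^(42:ℕ)) := by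
            apply mul_le_mul_of_nonneg_left _ (by positivity)
            apply pow_le_pow_left₀ (by positivity) hLbound
    rw [Real.log_mul (by positivity) (by positivity), Real.log_pow] at h1
    push_cast at h1
    linarith
  have hlog2x : Real.log (2*x) ≤ 2 * lx := by
    rw [Real.log_mul (by norm_num) (by linarith)]
    have h5 : Real.log 2 ≤ 1 := by
      have := Real.log_le_sub_one_of_pos (show (0:ℝ) < 2 by norm_num)
      linarith
    linarith
  have hKR : Real.log ((K:ℝ)+2) ≤ lx := by
    have : ((K:ℝ)+2) = ((K+2:ℕ):ℝ) := by push_cast; ring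
    rw [this]
    exact_mod_cast hKcond
  have hlogD2 : Real.log D ≤ 85 * lx := by linarith
  have hexp : (t:ℝ) * Real.log D ≤ 200 * x := by
    have h1 : (t:ℝ) * Real.log D ≤ (t:ℝ) * (85 * lx) :=
      mul_le_mul_of_nonneg_left hlogD2 (Nat.cast_nonneg t)
    have h2 : (t:ℝ) * (85 * lx) = 85 * ((t:ℝ) * lx) := by ring
    have h3 : 85 * ((t:ℝ) * lx) ≤ 85 * ((3/2) * x) := by
      apply mul_le_mul_of_nonneg_left _ (by norm_num)
      exact ht
    nlinarith
  have hDpos : (0:ℝ) < (D:ℝ) := by exact_mod_cast hD1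
  have e1 : ((D:ℝ))^(t:ℕ) = Real.exp ((t:ℝ) * Real.log D) := by
    rw [← Real.log_pow, Real.exp_log (by positivity)]
  have e2 : (n:ℝ)^(200:ℝ) = Real.exp (200 * x) := by
    rw [Real.rpow_def_of_pos hnR]
    ring_nf
    rw [hx]
  rw [e1, e2]
  exact Real.exp_le_exp.mpr hexp



lemma exists_rep (A : Set ℕ) (h1A : 1 ∈ A) (K N : ℕ)
    (hKbig : 2^(2^16) ≤ K) (hKN : N * N ≤ K)
    (hcount_low : ∀ y : ℕ, N ≤ y →
      Real.log y ≤ (((A ∩ Set.Icc 1 y).ncard : ℕ) : ℝ) * (2 * Real.log (Real.log y))) :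
    ∀ r : ℕ, ∀ B : ℕ, 2 ≤ B →
      (K < r → Phi r ≤ (A ∩ Set.Icc 1 (B-1)).ncard) →
      ∃ f : ℕ →₀ ℕ, ↑f.support ⊆ A ∩ Set.Icc 1 (B-1) ∧ (∀ a ∈ f.support, f a ∈ MK K) ∧
        f.sum (fun a m => m * a) = r := by
  intro r
  induction r using Nat.strong_induction_on with
  | _ r ih =>
    intro B hB hinv
    rcases Nat.eq_zero_or_pos r with hr0 | hrpos
    · exact ⟨0, by simp, by simp, by simp [hr0]⟩
    rcases le_or_gt r K with hrK | hrK
    · -- endgame: r ∈ [1, K], use f = single 1 r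
      refine ⟨Finsupp.single 1 r, ?_, ?_, ?_⟩
      · rw [Finsupp.support_single_ne_zero _ (by omega)]
        intro z hz
        simp only [Finset.coe_singleton, Set.mem_singleton_iff] at hz
        subst hz
        exact ⟨h1A, by omega, by omega⟩
      · intro a ha
        rw [Finsupp.support_single_ne_zero _ (by omega)] at ha
        simp only [Finset.mem_singleton] at ha
        subst ha
        rw [Finsupp.single_eq_same]
        exact Icc_subset_MK K ⟨by omega, hrK⟩
      · rw [Finsupp.sum_single_index (by simp)]
        omega
    · -- main case
      have hrbig : 2^(2^16) < r := lt_of_le_of_lt hKbig hrK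
      have h45 : 45000 ≤ Real.log r := log_big hrbig
      have hPhi2 : 2 ≤ Phi r := phi_ge_two h45
      have hinv' : Phi r ≤ (A ∩ Set.Icc 1 (B-1)).ncard := hinv hrK
      have hB1 : 1 ≤ B - 1 := by omega
      set X := min (B-1) (Nat.sqrt r) with hXdef
      have hXsqrt : X ≤ Nat.sqrt r := min_le_right _ _
      have hXB : X ≤ B - 1 := min_le_left _ _
      -- sqrt facts
      have hsqrtK : 2^(2^15) ≤ Nat.sqrt r := by
        have h1 : (2:ℕ)^(2^16) = 2^(2^15) * 2^(2^15) := by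
          rw [← pow_add]; norm_num
        have h2 : (2:ℕ)^(2^15) = Nat.sqrt (2^(2^16)) := by rw [h1, Nat.sqrt_eq]
        calc (2:ℕ)^(2^15) = Nat.sqrt (2^(2^16)) := h2
          _ ≤ Nat.sqrt r := Nat.sqrt_le_sqrt hrbig.le
      have hNsqrt : N ≤ Nat.sqrt r := Nat.le_sqrt.mpr (le_trans hKN hrK.le)
      have hsqrt1 : 1 ≤ Nat.sqrt r := le_trans (Nat.one_le_two_pow) hsqrtK
      have hX1 : 1 ≤ X := le_min hB1 hsqrt1
      -- count at X is at least Phi r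
      have hcX : Phi r ≤ (A ∩ Set.Icc 1 X).ncard := by
        rcases le_or_gt (B-1) (Nat.sqrt r) with hcap | hcap
        · rw [hXdef, min_eq_left hcap]
          exact hinv'
        · rw [hXdef, min_eq_right hcap.le]
          have h1 := hcount_low (Nat.sqrt r) hNsqrt
          have h2 := avail_num hrbig _ h1
          exact le_trans (Nat.le_succ _) h2
      -- find the largest element a of A in [2, X]
      have hfinX : (A ∩ Set.Icc 1 X).Finite := (Set.finite_Icc 1 X).inter_of_right A
      have hcnt2 : 2 ≤ (A ∩ Set.Icc 1 X).ncard := le_trans hPhi2 hcX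
      have hex2 : (A ∩ Set.Icc 2 X).Nonempty := by
        by_contra hcon
        rw [Set.not_nonempty_iff_eq_empty] at hcon
        have hsub : A ∩ Set.Icc 1 X ⊆ {1} := by
          intro b hb
          obtain ⟨hbA, hb1, hbX⟩ := hb
          simp only [Set.mem_singleton_iff]
          by_contra hne
          have hmem : b ∈ A ∩ Set.Icc 2 X := ⟨hbA, by omega, hbX⟩
          rw [hcon] at hmem
          exact hmem
        have hle := Set.ncard_le_ncard hsub (Set.finite_singleton 1)
        rw [Set.ncard_singleton] at hle
        omega
      obtain ⟨a₀, ha₀⟩ := hex2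
      have hfin2 : (A ∩ Set.Icc 2 X).Finite := (Set.finite_Icc 2 X).inter_of_right A
      have hne2 : hfin2.toFinset.Nonempty := ⟨a₀, hfin2.mem_toFinset.mpr ha₀⟩
      set a := hfin2.toFinset.max' hne2 with hadef
      have haS2 : a ∈ A ∩ Set.Icc 2 X := hfin2.mem_toFinset.mp (hfin2.toFinset.max'_mem hne2)
      obtain ⟨haA, ha2, haX⟩ := haS2
      have hamax : ∀ b ∈ A ∩ Set.Icc 2 X, b ≤ a := fun b hb =>
        hfin2.toFinset.le_max' b (hfin2.mem_toFinset.mpr hb)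
      have haSqrt : a ≤ Nat.sqrt r := le_trans haX hXsqrt
      have har : a ≤ r := le_trans haSqrt (Nat.sqrt_le_self r)
      -- count split
      have hsplit : A ∩ Set.Icc 1 X = insert a (A ∩ Set.Icc 1 (a-1)) := by
        ext b
        constructor
        · rintro ⟨hbA, hb1, hbX⟩
          rcases eq_or_ne b a with rfl | hne
          · exact Set.mem_insert _ _
          · apply Set.mem_insert_of_mem
            rcases Nat.lt_or_ge b 2 with hb2 | hb2
            · exact ⟨hbA, by omega, by omega⟩
            · have := hamax b ⟨hbA, hb2, hbX⟩
              exact ⟨hbA, hb1, by omega⟩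
        · rintro (rfl | ⟨hbA, hb1, hba⟩)
          · exact ⟨haA, by omega, haX⟩
          · exact ⟨hbA, hb1, by omega⟩
      have hnotmem : a ∉ A ∩ Set.Icc 1 (a-1) := by
        rintro ⟨-, -, h⟩; omega
      have hfin1 : (A ∩ Set.Icc 1 (a-1)).Finite := (Set.finite_Icc 1 (a-1)).inter_of_right A
      have hcount_split : (A ∩ Set.Icc 1 X).ncard = (A ∩ Set.Icc 1 (a-1)).ncard + 1 := by
        rw [hsplit, Set.ncard_insert_of_notMem hnotmem hfin1]
      -- q and m
      set q := r / a with hqdef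
      have hapos : 0 < a := by omega
      have hqa : q * a ≤ r := Nat.div_mul_le_self r a
      have hsq_le_q : Nat.sqrt r ≤ q := by
        have h1 : Nat.sqrt r ≤ r / Nat.sqrt r :=
          (Nat.le_div_iff_mul_le (by omega)).mpr (Nat.sqrt_le r)
        have h2 : r / Nat.sqrt r ≤ r / a := Nat.div_le_div_left haSqrt hapos
        exact le_trans h1 h2
      have hq512 : 2^512 ≤ q := by
        have h1 : (2:ℕ)^512 ≤ 2^(2^15) := Nat.pow_le_pow_right (by norm_num) (by norm_num)
        exact le_trans (le_trans h1 hsqrtK) hsq_le_q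
      obtain ⟨m, hmflt, hm1, hmq, herr⟩ := approx q hq512
      have hmqa : m * a ≤ q * a := Nat.mul_le_mul_right a hmq
      have hma : m * a ≤ r := le_trans hmqa hqa
      set r' := r - m * a with hr'def
      have hr'lt : r' < r := by
        have : 1 * 2 ≤ m * a := Nat.mul_le_mul hm1 ha2
        omega
      -- ℕ-log facts
      set Lr := Nat.log 2 r with hLrdef
      have hr0 : r ≠ 0 := by omega
      have hLr16 : 2^16 ≤ Lr := (Nat.le_log_iff_pow_le one_lt_two hr0).mpr hrbig.le
      set LLr := Nat.log 2 Lr with hLLrdef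
      have hLr0 : Lr ≠ 0 := by positivity
      have hLLr16 : 16 ≤ LLr := by
        have : (2:ℕ)^16 ≤ Lr := hLr16
        have h2 := (Nat.le_log_iff_pow_le one_lt_two hLr0).mpr this
        omega
      have h2LL : 2^LLr ≤ Lr := Nat.pow_log_le_self 2 hLr0
      have hLrlt : Lr < 2^(LLr+1) := Nat.lt_pow_succ_log_self one_lt_two Lr
      -- sqrt bound : 2 * sqrt r * Lr^15 ≤ r
      have hsq2 : 2^(Lr/2) ≤ Nat.sqrt r := by
        apply Nat.le_sqrt.mpr
        calc 2^(Lr/2) * 2^(Lr/2) = 2^(Lr/2 + Lr/2) := (pow_add 2 _ _).symm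
          _ ≤ 2^Lr := Nat.pow_le_pow_right (by norm_num) (by omega)
          _ ≤ r := Nat.pow_log_le_self 2 hr0
      have h2half : 2^(LLr-1) ≤ Lr/2 := by
        apply (Nat.le_div_iff_mul_le (by norm_num)).mpr
        have : 2^(LLr-1) * 2 = 2^LLr := by
          rw [← pow_succ]
          congr 1; omega
        omega
      have hLp15 : 2 * Lr^15 ≤ 2^(Lr/2) := by
        have e1 : 2 * ((2:ℕ)^(LLr+1))^15 = 2^(15*LLr + 16) := by
          rw [← pow_mul]
          rw [show (LLr+1)*15 = 15*LLr+15 by ring]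
          rw [← pow_succ']
        calc 2 * Lr^15 ≤ 2 * (2^(LLr+1))^15 :=
              Nat.mul_le_mul_left 2 (Nat.pow_le_pow_left hLrlt.le 15)
          _ = 2^(15*LLr+16) := e1
          _ ≤ 2^(Lr/2) := Nat.pow_le_pow_right (by norm_num)
              (le_trans (aux15 LLr hLLr16) h2half)
      have hsqrt_bound : 2 * (Nat.sqrt r * Lr^15) ≤ r := by
        calc 2 * (Nat.sqrt r * Lr^15) = Nat.sqrt r * (2 * Lr^15) := by ring
          _ ≤ Nat.sqrt r * 2^(Lr/2) := Nat.mul_le_mul_left _ hLp15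
          _ ≤ Nat.sqrt r * Nat.sqrt r := Nat.mul_le_mul_left _ hsq2
          _ ≤ r := Nat.sqrt_le r
      -- error bound
      set Lq := Nat.log 2 q with hLqdef
      have hq0 : q ≠ 0 := by
        have : (0:ℕ) < 2^512 := Nat.pow_pos (by norm_num)
        omega
      have hLq : Lr / 2 ≤ Lq :=
        (Nat.le_log_iff_pow_le one_lt_two hq0).mpr (le_trans hsq2 hsq_le_q)
      have hLq1 : 1 ≤ Lq := by
        have h1 : (65536:ℕ) ≤ Lr := by
          calc (65536:ℕ) = 2^16 := by norm_num
            _ ≤ Lr := hLr16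
        omega
      have hLr3 : Lr ≤ 3 * Lq := by omega
      have her_r : (q-m)*a*Lq^20 ≤ 2^20 * r := by
        calc (q-m)*a*Lq^20 = ((q-m)*Lq^20)*a := by ring
          _ ≤ (2^20 * q)*a := Nat.mul_le_mul_right _ herr
          _ = 2^20 * (q*a) := by ring
          _ ≤ 2^20 * r := Nat.mul_le_mul_left _ hqa
      have hLr20 : Lr^20 ≤ 3^20 * Lq^20 := by
        calc Lr^20 ≤ (3*Lq)^20 := Nat.pow_le_pow_left hLr3 _
          _ = 3^20 * Lq^20 := mul_pow 3 Lq 20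
      have her_Lr : (q-m)*a*Lr^20 ≤ 2^52 * r := by
        calc (q-m)*a*Lr^20 ≤ (q-m)*a*(3^20 * Lq^20) :=
              Nat.mul_le_mul_left _ hLr20
          _ = 3^20 * ((q-m)*a*Lq^20) := by ring
          _ ≤ 3^20 * (2^20 * r) := Nat.mul_le_mul_left _ her_r
          _ = (3^20 * 2^20) * r := by ring
          _ ≤ 2^52 * r := Nat.mul_le_mul_right r (by norm_num)
      have hpow5 : (2:ℕ)^80 ≤ Lr^5 := by
        calc (2:ℕ)^80 = (2^16)^5 := by norm_num
          _ ≤ Lr^5 := Nat.pow_le_pow_left hLr16 5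
      have her_final : 2 * ((q-m)*a*Lr^15) ≤ r := by
        have h1 : (q-m)*a*Lr^15 * 2^80 ≤ (q-m)*a*Lr^20 := by
          calc (q-m)*a*Lr^15*2^80 ≤ (q-m)*a*Lr^15*Lr^5 := Nat.mul_le_mul_left _ hpow5
            _ = (q-m)*a*(Lr^15*Lr^5) := by ring
            _ = (q-m)*a*Lr^20 := by rw [← pow_add]
        have h2 : (q-m)*a*Lr^15 * 2^80 ≤ 2^52 * r := le_trans h1 her_Lr
        have h3 : (2 * ((q-m)*a*Lr^15)) * 2^52 ≤ ((q-m)*a*Lr^15) * 2^80 := by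
          calc (2 * ((q-m)*a*Lr^15)) * 2^52 = ((q-m)*a*Lr^15) * 2^53 := by ring
            _ ≤ ((q-m)*a*Lr^15) * 2^80 :=
                Nat.mul_le_mul_left _ (Nat.pow_le_pow_right (by norm_num) (by norm_num))
        have h4 : (2 * ((q-m)*a*Lr^15)) * 2^52 ≤ (r) * 2^52 := by
          calc (2 * ((q-m)*a*Lr^15)) * 2^52 ≤ 2^52 * r := le_trans h3 h2
            _ = r * 2^52 := by ring
        exact Nat.le_of_mul_le_mul_right h4 (Nat.pow_pos (by norm_num))
      -- decomposition
      have hmodeq : a * (r / a) + r % a = r := Nat.div_add_mod r a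
      have hmodlt : r % a < a := Nat.mod_lt r hapos
      have hsubmul : (q - m) * a = q*a - m*a := Nat.sub_mul q m a
      have hdecomp : r' ≤ (Nat.sqrt r - 1) + (q - m)*a := by
        have e1 : q * a = a * (r/a) := by rw [hqdef]; ring
        omega
      have hdec : r' * Lr^15 ≤ r := by
        have h6 : r' * Lr^15 ≤ ((Nat.sqrt r - 1) + (q-m)*a) * Lr^15 :=
          Nat.mul_le_mul_right _ hdecomp
        have h7 : ((Nat.sqrt r - 1) + (q-m)*a) * Lr^15
            = (Nat.sqrt r - 1) * Lr^15 + (q-m)*a*Lr^15 := by ring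
        have h8 : (Nat.sqrt r - 1) * Lr^15 ≤ Nat.sqrt r * Lr^15 :=
          Nat.mul_le_mul_right _ (by omega)
        have h9 : 2 * (r' * Lr^15) ≤ 2 * (Nat.sqrt r * Lr^15) + 2 * ((q-m)*a*Lr^15) := by
          omega
        have h10 : 2 * (r' * Lr^15) ≤ 2 * r := by omega
        omega
      -- recursive invariant
      have hinv_new : K < r' → Phi r' ≤ (A ∩ Set.Icc 1 (a-1)).ncard := by
        intro hK'
        have hr'big : 2^(2^16) < r' := lt_of_le_of_lt hKbig hK'
        have h45' : 45000 ≤ Real.log r' := log_big hr'big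
        have hr'pos : (0:ℝ) < (r':ℝ) := by
          have : 0 < r' := by omega
          exact_mod_cast this
        have hLrposR : (0:ℝ) < (Lr:ℝ) := by
          have : 0 < Lr := by omega
          exact_mod_cast this
        have hlogLr : Real.log r ≤ (Lr:ℝ) := by
          have h1 : r < 2^(Lr+1) := Nat.lt_pow_succ_log_self one_lt_two r
          have h2 : (r:ℝ) ≤ ((2:ℕ)^(Lr+1) : ℝ) := by exact_mod_cast h1.le
          have h3 : ((2:ℕ)^(Lr+1) : ℝ) = (2:ℝ)^(Lr+1) := by push_cast; ring
          have h4 : Real.log r ≤ (Lr+1 : ℝ) * Real.log 2 := by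
            calc Real.log r ≤ Real.log ((2:ℝ)^(Lr+1)) := by
                  apply Real.log_le_log (by exact_mod_cast hrpos)
                  rw [← h3]; exact h2
              _ = (Lr+1 : ℕ) * Real.log 2 := by rw [Real.log_pow]
              _ = ((Lr:ℝ)+1) * Real.log 2 := by push_cast; ring
          have h5 : Real.log 2 ≤ 0.7 := by
            have := Real.log_two_lt_d9
            linarith
          have h6 : (3:ℝ) ≤ (Lr:ℝ) := by
            have : (3:ℕ) ≤ Lr := by
              have : (65536:ℕ) ≤ Lr := by
                calc (65536:ℕ) = 2^16 := by norm_num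
                  _ ≤ Lr := hLr16
              omega
            exact_mod_cast this
          have h8 : ((Lr:ℝ)+1) * Real.log 2 ≤ ((Lr:ℝ)+1) * 0.7 :=
            mul_le_mul_of_nonneg_left h5 (by linarith)
          linarith
        have hlogdec : Real.log r' ≤ Real.log r - 15 * Real.log (Real.log r) := by
          have h1 : (r':ℝ) * (Lr:ℝ)^15 ≤ (r:ℝ) := by exact_mod_cast hdec
          have h2 : Real.log ((r':ℝ) * (Lr:ℝ)^15) = Real.log r' + 15 * Real.log Lr := by
            rw [Real.log_mul (ne_of_gt hr'pos) (by positivity), Real.log_pow]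
            push_cast; ring
          have h3 : Real.log ((r':ℝ) * (Lr:ℝ)^15) ≤ Real.log r :=
            Real.log_le_log (by positivity) h1
          have h4 : Real.log (Real.log r) ≤ Real.log Lr :=
            Real.log_le_log (by linarith) hlogLr
          rw [h2] at h3
          linarith
        have hphidec := phi_dec h45 h45' hlogdec
        omega
      obtain ⟨f', hf'supp, hf'mem, hf'sum⟩ := ih r' hr'lt a ha2 hinv_new
      have hanotin : a ∉ f'.support := by
        intro hmem'
        have h := hf'supp hmem'
        have : a ≤ a - 1 := h.2.2
        omega
      have hf'a0 : f' a = 0 := Finsupp.notMem_support_iff.mp hanotin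
      refine ⟨f' + Finsupp.single a m, ?_, ?_, ?_⟩
      · intro b hb
        have hb' : b ∈ f'.support ∪ (Finsupp.single a m).support :=
          Finsupp.support_add hb
        rcases Finset.mem_union.mp hb' with hbf | hbs
        · have h := hf'supp hbf
          exact ⟨h.1, h.2.1, by have := h.2.2; omega⟩
        · have : b = a := by
            have := Finsupp.support_single_subset hbs
            simpa using this
          subst this
          exact ⟨haA, by omega, by omega⟩
      · intro b hb
        have hval : (f' + Finsupp.single a m) b = f' b + Finsupp.single a m b :=
          Finsupp.add_apply _ _ _
        rcases eq_or_ne b a with rfl | hne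
        · rw [hval, hf'a0, Finsupp.single_eq_same, zero_add]
          exact Or.inr hmflt
        · rw [hval, Finsupp.single_eq_of_ne hne, add_zero]
          apply hf'mem
          rw [Finsupp.mem_support_iff]
          intro hzero
          apply Finsupp.mem_support_iff.mp hb
          rw [hval, hzero, Finsupp.single_eq_of_ne hne]
          rfl
      · rw [Finsupp.sum_add_index' (fun i => zero_mul i) (fun i b₁ b₂ => add_mul b₁ b₂ i)]
        rw [hf'sum, Finsupp.sum_single_index (zero_mul a)]
        omega


end Stmt13

open Stmt13 in
theorem stmt13 (k : ℕ) (A : Fin k → Set ℕ)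
    (hA : ∀ j, (A j).Infinite) (hApos : ∀ j, ∀ a ∈ A j, 0 < a) (h1 : ∀ j, 1 ∈ A j)
    (hdens : ∀ j, Tendsto
      (fun n : ℕ => (((A j) ∩ Set.Icc 1 n).ncard : ℝ) * Real.log (Real.log n) / Real.log n)
      atTop (nhds 1)) :
    ∃ (c : ℝ) (n₀ : ℕ) (M : Set ℕ), M.Infinite ∧ (∀ m ∈ M, 0 < m) ∧
      ∀ j, ∀ n : ℕ, n > n₀ →
        0 < pCount (A j) M n ∧ (pCount (A j) M n : ℝ) ≤ (n : ℝ) ^ c := by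
  classical
  have hAll : ∀ᶠ y : ℕ in atTop, ∀ j,
      (((A j) ∩ Set.Icc 1 y).ncard : ℝ) * Real.log (Real.log y) / Real.log y
        ∈ Set.Ioo (1/2 : ℝ) (3/2) :=
    eventually_all.mpr fun j => (hdens j).eventually (Ioo_mem_nhds (by norm_num) (by norm_num))
  obtain ⟨N₁, hN₁⟩ := eventually_atTop.mp hAll
  set N := max N₁ 16 with hNdef
  have hN16 : 16 ≤ N := le_max_right _ _
  have hlogy : ∀ y : ℕ, N ≤ y → (2:ℝ) ≤ Real.log y ∧ (0:ℝ) < Real.log (Real.log y) := by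
    intro y hy
    have h16 : (16:ℝ) ≤ (y:ℝ) := by exact_mod_cast le_trans hN16 hy
    have hl : (2:ℝ) ≤ Real.log y := le_trans log16 (Real.log_le_log (by norm_num) h16)
    refine ⟨hl, ?_⟩
    calc (0:ℝ) < Real.log 2 := Real.log_pos (by norm_num)
      _ ≤ Real.log (Real.log y) := Real.log_le_log (by norm_num) (by linarith)
  have hlow : ∀ j, ∀ y : ℕ, N ≤ y →
      Real.log y ≤ (((A j ∩ Set.Icc 1 y).ncard : ℕ) : ℝ) * (2 * Real.log (Real.log y)) := by
    intro j y hy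
    obtain ⟨hly, hlly⟩ := hlogy y hy
    obtain ⟨hlo, -⟩ := hN₁ y (le_trans (le_max_left _ _) hy) j
    have hlgpos : (0:ℝ) < Real.log y := by linarith
    rw [lt_div_iff₀ hlgpos] at hlo
    linarith
  have hhigh : ∀ j, ∀ y : ℕ, N ≤ y →
      (((A j ∩ Set.Icc 1 y).ncard : ℕ):ℝ) * Real.log (Real.log y) ≤ (3/2) * Real.log y := by
    intro j y hy
    obtain ⟨hly, -⟩ := hlogy y hy
    obtain ⟨-, hhi⟩ := hN₁ y (le_trans (le_max_left _ _) hy) j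
    have hlgpos : (0:ℝ) < Real.log y := by linarith
    rw [div_lt_iff₀ hlgpos] at hhi
    linarith
  set K := 2^(2^16) + N*N with hKdef
  have hE : ∀ᶠ n : ℕ in atTop,
      (Real.log ((K:ℝ)+2) ≤ Real.log (Real.log n)) ∧ ((4:ℝ) ≤ Real.log n) := by
    have h1 : Tendsto (fun n : ℕ => Real.log n) atTop atTop :=
      Real.tendsto_log_atTop.comp tendsto_natCast_atTop_atTop
    have h2 : Tendsto (fun n : ℕ => Real.log (Real.log n)) atTop atTop :=
      Real.tendsto_log_atTop.comp h1
    exact (h2.eventually_ge_atTop _).and (h1.eventually_ge_atTop 4)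
  obtain ⟨N₂, hN₂⟩ := eventually_atTop.mp hE
  refine ⟨200, max (max K N) N₂, MK K, MK_infinite K, MK_pos K, ?_⟩
  intro j n hn
  have hnK : K < n := lt_of_le_of_lt (le_trans (le_max_left _ _) (le_max_left _ _)) hn
  have hnN : N ≤ n := le_of_lt (lt_of_le_of_lt (le_trans (le_max_right _ _) (le_max_left _ _)) hn)
  have hnN₂ : N₂ ≤ n := le_of_lt (lt_of_le_of_lt (le_max_right _ _) hn)
  have hn16 : 16 ≤ n := le_trans hN16 hnN
  have hnbig : 2^(2^16) < n := lt_of_le_of_lt (Nat.le_add_right _ _) hnK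
  obtain ⟨hKcond, hlog4⟩ := hN₂ n hnN₂
  -- positivity
  have hinvtop : K < n → Phi n ≤ (A j ∩ Set.Icc 1 ((n+1)-1)).ncard := by
    intro _
    have : (n+1)-1 = n := rfl
    rw [this]
    exact top_num hnbig _ (hlow j n hnN)
  obtain ⟨f, hfsupp, hfmem, hfsum⟩ :=
    exists_rep (A j) (h1 j) K N (Nat.le_add_right _ _) (Nat.le_add_left _ _) (hlow j)
      n (n+1) (by omega) hinvtop
  obtain ⟨hfin, hle⟩ := repr_finite_and_le (A j) (MK K) (hApos j) n
  constructor
  · rw [pCount]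
    rw [Set.ncard_pos hfin]
    refine ⟨f, ?_, hfmem, hfsum⟩
    exact le_trans hfsupp Set.inter_subset_left
  · -- upper bound
    set t := (A j ∩ Set.Icc 1 n).ncard with htdef
    set D := K + (Nat.log 2 n + 2)^42 + 1 with hDdef
    have hMc : (MK K ∩ Set.Icc 1 n).ncard + 1 ≤ D := by
      have := MK_count K n (by omega)
      omega
    have h2 : pCount (A j) (MK K) n ≤ D ^ t :=
      le_trans hle (Nat.pow_le_pow_left hMc t)
    have h3 : ((D:ℝ))^(t:ℕ) ≤ (n:ℝ)^(200:ℝ) :=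
      final_bound K n t D hn16 (by omega) hlog4 hKcond (le_refl _) (hhigh j n hnN)
    calc (pCount (A j) (MK K) n : ℝ) ≤ ((D^t : ℕ) : ℝ) := by exact_mod_cast h2
      _ = ((D:ℝ))^(t:ℕ) := by push_cast; ring
      _ ≤ (n:ℝ)^(200:ℝ) := h3
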